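/- Let k be a field and consider the polynomial ring k[x_1,...,x_n]. Define the k-algebra homomorphism σ*: k[x_1,...,x_n] → k[y_1,...,y_n] (the chart map of the blowing-up of the subspace {x_r = ... = x_n = 0} in the x_r-chart) by σ*(x_j) = y_j for j ≤ r and σ*(x_j) = y_r·y_j for j > r. Then for every polynomial f: (1) σ*(∂f/∂x_j) = ∂(σ*f)/∂y_j for j < r; (2) σ*(x_r·∂f/∂x_r) = y_r·∂(σ*f)/∂y_r − Σ_{j=r+1}^n y_j·∂(σ*f)/∂y_j; (3) σ*(x_j·∂f/∂x_j) = y_j·∂(σ*f)/∂y_j for j > r. -/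
import Mathlib


open MvPolynomial

/-- The chart map of the blowing-up of `{x_r = ⋯ = x_n = 0}` in the `x_r`-chart:
`x_j ↦ y_j` for `j ≤ r`, `x_j ↦ y_r·y_j` for `j > r`. -/
noncomputable def sigmaStar (k : Type) [Field k] (n : ℕ) (r : Fin n) :
    MvPolynomial (Fin n) k →ₐ[k] MvPolynomial (Fin n) k :=
  aeval fun j => if j ≤ r then X j else X r * X j

lemma chain_key {k : Type} [CommRing k] {τ : Type}
    (σ : MvPolynomial τ k →ₐ[k] MvPolynomial τ k)
    (D E : Derivation k (MvPolynomial τ k) (MvPolynomial τ k))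
    (h : ∀ i, σ (D (X i)) = E (σ (X i))) (f : MvPolynomial τ k) :
    σ (D f) = E (σ f) := by
  induction f using MvPolynomial.induction_on with
  | C a => simp
  | add p q hp hq => simp [hp, hq]
  | mul_X p i hp =>
      rw [Derivation.leibniz, smul_eq_mul, smul_eq_mul, map_add, map_mul, map_mul,
        map_mul, Derivation.leibniz, smul_eq_mul, smul_eq_mul, hp, h]

lemma der_sum_apply {k : Type} [CommRing k] {τ ι : Type} (s : Finset ι)
    (D : ι → Derivation k (MvPolynomial τ k) (MvPolynomial τ k)) (g : MvPolynomial τ k) :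
    (∑ j ∈ s, D j) g = ∑ j ∈ s, D j g := by
  classical
  induction s using Finset.induction_on with
  | empty => simp
  | insert hx ih => simp_all

lemma pdX {k : Type} [CommRing k] {n : ℕ} (a b : Fin n) :
    pderiv a (X b : MvPolynomial (Fin n) k) = if a = b then 1 else 0 := by
  rcases eq_or_ne a b with h | h
  · subst h; simp
  · classical
    rw [pderiv_X]
    simp [Pi.single_apply, h, Ne.symm h]

theorem blowup_chart_chain_rule (k : Type) [Field k] (n : ℕ) (r : Fin n)
    (f : MvPolynomial (Fin n) k) :
    (∀ j : Fin n, j < r →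
      sigmaStar k n r (pderiv j f) = pderiv j (sigmaStar k n r f)) ∧
    (sigmaStar k n r (X r * pderiv r f) =
      X r * pderiv r (sigmaStar k n r f) -
        ∑ j ∈ Finset.univ.filter (fun j => r < j),
          X j * pderiv j (sigmaStar k n r f)) ∧
    (∀ j : Fin n, r < j →
      sigmaStar k n r (X j * pderiv j f) = X j * pderiv j (sigmaStar k n r f)) := by
  refine ⟨?_, ?_, ?_⟩
  · intro j hj
    refine chain_key (sigmaStar k n r) (pderiv j) (pderiv j) (fun i => ?_) f
    simp only [sigmaStar, aeval_X]
    by_cases hi : i ≤ r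
    · rcases eq_or_ne j i with h | h
      · subst h; simp [pdX, hi]
      · simp [pdX, h, hi, Pi.single_apply, Ne.symm h]
    · have hji : j ≠ i := fun h => hi (h ▸ hj.le)
      have hjr : j ≠ r := hj.ne
      simp [hi, hji, hjr, pdX, map_mul, Pi.single_apply, Ne.symm hji, Ne.symm hjr]
  · have key := chain_key (sigmaStar k n r)
      ((X r : MvPolynomial (Fin n) k) • pderiv r)
      ((X r : MvPolynomial (Fin n) k) • pderiv r -
        ∑ j ∈ Finset.univ.filter (fun j => r < j),
          (X j : MvPolynomial (Fin n) k) • pderiv j)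
      (fun i => ?_) f
    · simpa only [Derivation.coe_sub, Pi.sub_apply, Derivation.coe_smul, Pi.smul_apply,
        smul_eq_mul, der_sum_apply] using key
    · simp only [sigmaStar, aeval_X, Derivation.coe_sub, Pi.sub_apply, Derivation.coe_smul,
        Pi.smul_apply, smul_eq_mul, der_sum_apply]
      by_cases hi : i ≤ r
      · have hz : ∀ j ∈ Finset.univ.filter (fun j => r < j),
            (X j : MvPolynomial (Fin n) k) * (pderiv j) (if i ≤ r then X i else X r * X i) = 0 := by
          intro j hj
          simp only [Finset.mem_filter] at hj
          have : j ≠ i := ne_of_gt (lt_of_le_of_lt hi hj.2)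
          simp [hi, pdX, this]
        rw [Finset.sum_eq_zero hz]
        by_cases hir : r = i
        · subst hir; simp [pdX, map_mul]
        · simp [hi, pdX, hir, Ne.symm hir]
      · have hri : r < i := lt_of_not_ge hi
        have hsum : ∑ j ∈ Finset.univ.filter (fun j => r < j),
            (X j : MvPolynomial (Fin n) k) * (pderiv j) (if i ≤ r then X i else X r * X i) =
            X i * X r := by
          rw [Finset.sum_eq_single i]
          · simp [hi, pdX, map_mul, (ne_of_gt hri), Ne.symm (ne_of_gt hri)]
          · intro j hj hji
            simp only [Finset.mem_filter] at hj
            simp [hi, map_mul, pdX, hji, ne_of_gt hj.2]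
          · intro h; exact absurd (Finset.mem_filter.mpr ⟨Finset.mem_univ i, hri⟩) h
        rw [hsum]
        simp only [hi, if_neg hi, pdX, map_mul]
        simp [pdX, ne_of_gt hri, Ne.symm (ne_of_gt hri)]
        ring
  · intro j hj
    have key := chain_key (sigmaStar k n r)
      ((X j : MvPolynomial (Fin n) k) • pderiv j)
      ((X j : MvPolynomial (Fin n) k) • pderiv j)
      (fun i => ?_) f
    · simpa only [Derivation.coe_smul, Pi.smul_apply, smul_eq_mul] using key
    · simp only [sigmaStar, aeval_X, Derivation.coe_smul, Pi.smul_apply, smul_eq_mul]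
      by_cases hi : i ≤ r
      · have hji : j ≠ i := ne_of_gt (lt_of_le_of_lt hi hj)
        simp [hi, pdX, hji, not_le.mpr hj]
      · by_cases hij : i = j
        · subst hij
          simp [hi, map_mul, pdX, ne_of_gt hj, Ne.symm (ne_of_gt hj)]
          ring
        · simp [hi, map_mul, pdX, hij, Ne.symm hij, ne_of_gt hj, not_le.mpr hj]
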